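/- In a simply-laced triangle-free Coxeter system, a link α of rank r ≥ 1 is braid equivalent to a Fibonacci link if and only if the subgraph of the Coxeter graph induced by the set of generators appearing in α is a star graph (a complete bipartite graph K_{1,k} for some k). -/

import Mathlib

open List

namespace BraidFormal

variable {B : Type*}

/-- A single braid move: replace a factor `s t s` with `t s t` where `m(s,t) = 3`. -/
def IsBraidMove (M : CoxeterMatrix B) (w w' : List B) : Prop :=
  ∃ (u v : List B) (s t : B), M s t = 3 ∧
    w = u ++ [s, t, s] ++ v ∧ w' = u ++ [t, s, t] ++ v

/-- Braid equivalence: the reflexive-transitive closure of braid moves. -/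
def BraidEquiv (M : CoxeterMatrix B) : List B → List B → Prop :=
  Relation.ReflTransGen (IsBraidMove M)

/-- The braid class of a word. -/
def BraidClass (M : CoxeterMatrix B) (α : List B) : Set (List B) :=
  {β | BraidEquiv M α β}

/-- `w` has a braid shadow at (0-based) positions `i, i+1, i+2`:
the letters there are `s, t, s` with `m(s,t) = 3`.
(This corresponds to the 1-based interval `⟦i+1, i+3⟧` of the paper.) -/
def HasShadowAt (M : CoxeterMatrix B) (w : List B) (i : ℕ) : Prop :=
  ∃ s t : B, M s t = 3 ∧ w[i]? = some s ∧ w[i+1]? = some t ∧ w[i+2]? = some s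

/-- The braid class of `α` has a braid shadow at position `i`. -/
def ClassHasShadowAt (M : CoxeterMatrix B) (α : List B) (i : ℕ) : Prop :=
  ∃ β ∈ BraidClass M α, HasShadowAt M β i

/-- The rank of a reduced expression: the number of braid shadows of its braid class. -/
noncomputable def rank (M : CoxeterMatrix B) (α : List B) : ℕ :=
  Set.ncard {i | ClassHasShadowAt M α i}

/-- A Coxeter matrix is simply laced if all entries are at most 3. -/
def SimplyLaced (M : CoxeterMatrix B) : Prop := ∀ s t : B, M s t ≤ 3

/-- A Coxeter matrix is triangle free if its Coxeter graph has no three-cycles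
(all of whose edges are labelled 3). -/
def TriangleFree (M : CoxeterMatrix B) : Prop :=
  ∀ s t u : B, s ≠ t → t ≠ u → s ≠ u → M s t = 3 → M t u = 3 → M s u ≠ 3

/-- The set of generators appearing in (0-based) position `k` of some word in the
braid class of `α`. -/
def classSupp (M : CoxeterMatrix B) (α : List B) (k : ℕ) : Set B :=
  {s | ∃ β ∈ BraidClass M α, β[k]? = some s}

/-- The set of generators appearing in (0-based) positions `i` through `j` of `w`. -/
def suppInterval (w : List B) (i j : ℕ) : Set B :=
  {s | ∃ k, i ≤ k ∧ k ≤ j ∧ w[k]? = some s}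

variable {W : Type*} [Group W] {M : CoxeterMatrix B}

/-- `α` is a link of rank `r`: a reduced expression of length `2r+1` whose braid class
has braid shadows exactly at the (0-based) positions `0, 2, 4, …, 2r-2`
(the 1-based intervals `⟦1,3⟧, ⟦3,5⟧, …, ⟦2r-1,2r+1⟧`). -/
def IsLink (cs : CoxeterSystem M W) (α : List B) (r : ℕ) : Prop :=
  cs.IsReduced α ∧ α.length = 2 * r + 1 ∧
    ∀ i : ℕ, ClassHasShadowAt M α i ↔ ∃ j < r, i = 2 * j

/-- A Fibonacci link: a link all of whose braid-class braid shadows are braid shadows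
of the link itself. -/
def IsFibLink (cs : CoxeterSystem M W) (φ : List B) (r : ℕ) : Prop :=
  IsLink cs φ r ∧ ∀ i : ℕ, ClassHasShadowAt M φ i → HasShadowAt M φ i

/-- The subgraph of the Coxeter graph of `M` induced by `X` is a star graph `K_{1,k}`:
there is a center adjacent (label 3) to every other vertex of `X`, and no two
non-central vertices of `X` are adjacent. -/
def IsStarOn (M : CoxeterMatrix B) (X : Set B) : Prop :=
  ∃ c ∈ X, (∀ x ∈ X, x ≠ c → M x c = 3) ∧
    ∀ x ∈ X, ∀ y ∈ X, x ≠ c → y ≠ c → x ≠ y → M x y ≠ 3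


/-! ### Auxiliary lemmas -/

section Aux

variable {M : CoxeterMatrix B}

lemma moveSymm {w w' : List B} (h : IsBraidMove M w w') : IsBraidMove M w' w := by
  obtain ⟨u, v, s, t, h3, h1, h2⟩ := h
  exact ⟨u, v, t, s, (M.symmetric t s).trans h3, h2, h1⟩

lemma equivSymm {w w' : List B} (h : BraidEquiv M w w') : BraidEquiv M w' w :=
  (@Relation.ReflTransGen.stdSymm _ _ ⟨fun _ _ hm => moveSymm hm⟩).symm _ _ h

lemma move_mem {w w' : List B} (h : IsBraidMove M w w') {a : B} (ha : a ∈ w) : a ∈ w' := by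
  obtain ⟨u, v, s, t, h3, rfl, rfl⟩ := h
  simp only [List.mem_append, List.mem_cons, List.not_mem_nil] at ha ⊢
  tauto

lemma equiv_mem {w w' : List B} (h : BraidEquiv M w w') {a : B} (ha : a ∈ w) : a ∈ w' := by
  induction h with
  | refl => exact ha
  | tail _ hm ih => exact move_mem hm ih

lemma move_length {w w' : List B} (h : IsBraidMove M w w') : w.length = w'.length := by
  obtain ⟨u, v, s, t, h3, rfl, rfl⟩ := h; simp

lemma equiv_length {w w' : List B} (h : BraidEquiv M w w') : w.length = w'.length := by
  induction h with
  | refl => rfl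
  | tail _ hm ih => exact ih.trans (move_length hm)

lemma class_eq {a b : List B} (h : BraidEquiv M a b) : BraidClass M a = BraidClass M b := by
  ext g
  exact ⟨fun hg => Relation.ReflTransGen.trans (equivSymm h) hg,
    fun hg => Relation.ReflTransGen.trans h hg⟩

variable {W : Type*} [Group W]

lemma braid_rel (cs : CoxeterSystem M W) {s t : B} (h3 : M s t = 3) :
    cs.simple s * cs.simple t * cs.simple s = cs.simple t * cs.simple s * cs.simple t := by
  have h := cs.simple_mul_simple_pow s t
  rw [h3] at h
  rw [pow_succ, pow_succ, pow_one] at h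
  have key : (cs.simple s * cs.simple t * cs.simple s) *
      (cs.simple t * cs.simple s * cs.simple t) = 1 := by
    calc (cs.simple s * cs.simple t * cs.simple s) *
        (cs.simple t * cs.simple s * cs.simple t)
        = cs.simple s * cs.simple t * (cs.simple s * cs.simple t) *
          (cs.simple s * cs.simple t) := by
          simp only [mul_assoc]
      _ = 1 := h
  rw [eq_inv_of_mul_eq_one_left key, mul_inv_rev, mul_inv_rev, cs.inv_simple, cs.inv_simple,
    mul_assoc]

lemma move_wordProd (cs : CoxeterSystem M W) {w w' : List B} (h : IsBraidMove M w w') :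
    cs.wordProd w = cs.wordProd w' := by
  obtain ⟨u, v, s, t, h3, rfl, rfl⟩ := h
  rw [cs.wordProd_append, cs.wordProd_append, cs.wordProd_append, cs.wordProd_append]
  have hb : cs.wordProd u * (cs.simple s * cs.simple t * cs.simple s) =
      cs.wordProd u * (cs.simple t * cs.simple s * cs.simple t) := by rw [braid_rel cs h3]
  simp only [CoxeterSystem.wordProd_cons, CoxeterSystem.wordProd_nil, mul_one]
  simp only [← mul_assoc] at hb ⊢
  rw [hb]

lemma equiv_wordProd (cs : CoxeterSystem M W) {w w' : List B} (h : BraidEquiv M w w') :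
    cs.wordProd w = cs.wordProd w' := by
  induction h with
  | refl => rfl
  | tail _ hm ih => exact ih.trans (move_wordProd cs hm)

lemma equiv_isReduced (cs : CoxeterSystem M W) {w w' : List B} (h : BraidEquiv M w w')
    (hred : cs.IsReduced w) : cs.IsReduced w' := by
  have h' : cs.length (cs.wordProd w) = w.length := hred
  show cs.length (cs.wordProd w') = w'.length
  rw [← equiv_wordProd cs h, ← equiv_length h]
  exact h'

lemma getElem?_triple (u v : List B) (a b d : B) (k : ℕ) :
    (u ++ [a, b, d] ++ v)[k]? =
      if k < u.length then u[k]?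
      else if k = u.length then some a
      else if k = u.length + 1 then some b
      else if k = u.length + 2 then some d
      else v[k - (u.length + 3)]? := by
  split_ifs with h1 h2 h3 h4
  · rw [List.getElem?_append_left (show k < (u ++ [a, b, d]).length by simp; omega),
      List.getElem?_append_left h1]
  · subst h2
    rw [List.getElem?_append_left (show u.length < (u ++ [a, b, d]).length by simp),
      List.getElem?_append_right (le_refl u.length)]
    simp
  · subst h3
    rw [List.getElem?_append_left (show u.length + 1 < (u ++ [a, b, d]).length by simp),
      List.getElem?_append_right (by omega)]
    have h5 : u.length + 1 - u.length = 1 := by omega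
    rw [h5]; rfl
  · subst h4
    rw [List.getElem?_append_left (show u.length + 2 < (u ++ [a, b, d]).length by simp),
      List.getElem?_append_right (by omega)]
    have h5 : u.length + 2 - u.length = 2 := by omega
    rw [h5]; rfl
  · rw [List.getElem?_append_right (show (u ++ [a, b, d]).length ≤ k by simp; omega)]
    have h5 : (u ++ [a, b, d]).length = u.length + 3 := by simp
    rw [h5]

lemma move_getElem {β β' : List B} (h : IsBraidMove M β β') :
    ∃ (q : ℕ) (s t : B), M s t = 3 ∧
      β[q]? = some s ∧ β[q+1]? = some t ∧ β[q+2]? = some s ∧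
      β'[q]? = some t ∧ β'[q+1]? = some s ∧ β'[q+2]? = some t ∧
      ∀ k, k ≠ q → k ≠ q + 1 → k ≠ q + 2 → β'[k]? = β[k]? := by
  obtain ⟨u, v, s, t, h3, rfl, rfl⟩ := h
  refine ⟨u.length, s, t, h3, ?_, ?_, ?_, ?_, ?_, ?_, ?_⟩
  · rw [getElem?_triple]; split_ifs <;> first | rfl | omega
  · rw [getElem?_triple]; split_ifs <;> first | rfl | omega
  · rw [getElem?_triple]; split_ifs <;> first | rfl | omega
  · rw [getElem?_triple]; split_ifs <;> first | rfl | omega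
  · rw [getElem?_triple]; split_ifs <;> first | rfl | omega
  · rw [getElem?_triple]; split_ifs <;> first | rfl | omega
  · intro k hk1 hk2 hk3
    rw [getElem?_triple, getElem?_triple]
    split_ifs <;> first | rfl | omega

lemma eq_take_triple {w : List B} {i : ℕ} {a b d : B}
    (ha : w[i]? = some a) (hb : w[i+1]? = some b) (hd : w[i+2]? = some d) :
    w = w.take i ++ [a, b, d] ++ w.drop (i+3) := by
  obtain ⟨hlen, hd'⟩ := List.getElem?_eq_some_iff.mp hd
  obtain ⟨hlen₁, ha'⟩ := List.getElem?_eq_some_iff.mp ha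
  obtain ⟨hlen₂, hb'⟩ := List.getElem?_eq_some_iff.mp hb
  have e1 : w.drop i = a :: w.drop (i+1) := by
    rw [List.drop_eq_getElem_cons (show i < w.length by omega)]
    congr 1
    all_goals exact ha'
  have e2 : w.drop (i+1) = b :: w.drop (i+2) := by
    rw [List.drop_eq_getElem_cons (show i + 1 < w.length by omega)]
    congr 1
    all_goals exact hb'
  have e3 : w.drop (i+2) = d :: w.drop (i+3) := by
    rw [List.drop_eq_getElem_cons (show i + 2 < w.length by omega)]
    congr 1
    all_goals exact hd'
  conv_lhs => rw [← List.take_append_drop i w, e1, e2, e3]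
  simp

lemma not_adjacent_eq (cs : CoxeterSystem M W) {w : List B} (hred : cs.IsReduced w)
    {i : ℕ} {a : B} (ha : w[i]? = some a) (hb : w[i+1]? = some a) : False := by
  obtain ⟨hlen, hb'⟩ := List.getElem?_eq_some_iff.mp hb
  obtain ⟨hlen₁, ha'⟩ := List.getElem?_eq_some_iff.mp ha
  have e1 : w.drop i = a :: w.drop (i+1) := by
    rw [List.drop_eq_getElem_cons (show i < w.length by omega)]
    congr 1
    all_goals exact ha'
  have e2 : w.drop (i+1) = a :: w.drop (i+2) := by
    rw [List.drop_eq_getElem_cons (show i + 1 < w.length by omega)]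
    congr 1
    all_goals exact hb'
  have hw : w = w.take i ++ ([a, a] ++ w.drop (i+2)) := by
    conv_lhs => rw [← List.take_append_drop i w, e1, e2]
    rfl
  have hπ : cs.wordProd w = cs.wordProd (w.take i ++ w.drop (i+2)) := by
    conv_lhs => rw [hw]
    rw [cs.wordProd_append, cs.wordProd_append, cs.wordProd_append]
    have h1 : cs.wordProd [a, a] = 1 := by
      simp [CoxeterSystem.wordProd_cons, cs.simple_mul_simple_self]
    rw [h1, one_mul]
  have hle := cs.length_wordProd_le (w.take i ++ w.drop (i+2))
  rw [← hπ] at hle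
  have hr : cs.length (cs.wordProd w) = w.length := hred
  rw [hr] at hle
  simp only [List.length_append, List.length_take, List.length_drop] at hle
  omega

/-- `k` is not covered by any window `⟦p, p+2⟧` with `p ∈ S`. -/
def Uncov (S : Finset ℕ) (k : ℕ) : Prop := ∀ p ∈ S, k < p ∨ p + 2 < k

/-- `β` is obtained from `w` by flipping the windows `⟦p, p+2⟧`, `p ∈ S`, each of which
reads `c x c` in `w` and `x c x` in `β`; the windows are pairwise far apart. -/
def InvS (w : List B) (c : B) (β : List B) (S : Finset ℕ) : Prop :=
  (∀ p ∈ S, ∀ q ∈ S, p ≠ q → p + 4 ≤ q ∨ q + 4 ≤ p) ∧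
  (∀ p ∈ S, ∃ x, x ≠ c ∧ w[p]? = some c ∧ w[p+1]? = some x ∧ w[p+2]? = some c ∧
      β[p]? = some x ∧ β[p+1]? = some c ∧ β[p+2]? = some x) ∧
  (∀ k, Uncov S k → β[k]? = w[k]?)

lemma not_uncov {S : Finset ℕ} {k : ℕ} (h : ¬ Uncov S k) : ∃ p ∈ S, p ≤ k ∧ k ≤ p + 2 := by
  unfold Uncov at h
  push_neg at h
  obtain ⟨p, hp, h1, h2⟩ := h
  exact ⟨p, hp, by omega, by omega⟩

lemma inv_core {w β : List B} {c : B} {S : Finset ℕ}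
    (hcc : ∀ (i : ℕ) (a : B), w[i]? = some a → w[i+1]? = some a → False)
    (hxcx : ∀ (i : ℕ) (x : B), x ≠ c → w[i]? = some x → w[i+1]? = some c →
      w[i+2]? = some x → False)
    (hinv : InvS w c β S)
    {i : ℕ} {s t : B} (hor : s = c ∨ t = c) (hne : s ≠ t)
    (h0 : β[i]? = some s) (h1 : β[i+1]? = some t) (h2 : β[i+2]? = some s) :
    (t = c ∧ i ∈ S) ∨
    (s = c ∧ Uncov S i ∧ Uncov S (i+1) ∧ Uncov S (i+2) ∧
      w[i]? = some c ∧ w[i+1]? = some t ∧ w[i+2]? = some c) := by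
  obtain ⟨hsep, hwin, hout⟩ := hinv
  rcases hor with hs | ht
  · -- `s = c`, pattern `c t c`
    rw [hs] at h0 h2
    have hui : Uncov S i := by
      by_contra hcov
      obtain ⟨p, hp, hle1, hle2⟩ := not_uncov hcov
      obtain ⟨x, hxc, hwp, hwp1, hwp2, hbp, hbp1, hbp2⟩ := hwin p hp
      have hcase : i = p ∨ i = p + 1 ∨ i = p + 2 := by omega
      rcases hcase with hip | hip | hip
      · rw [hip] at h0
        rw [h0] at hbp
        exact hxc (Option.some.inj hbp).symm
      · have hu3 : Uncov S (p+3) := by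
          intro p' hp'
          by_cases hpp : p' = p
          · subst hpp; omega
          · have := hsep p hp p' hp' (fun h => hpp h.symm); omega
        have e32 : β[p+3]? = some c := by
          rw [show p + 3 = i + 2 by omega]; exact h2
        rw [hout (p+3) hu3] at e32
        exact hcc (p+2) c hwp2 (by rw [show p + 2 + 1 = p + 3 by omega]; exact e32)
      · rw [hip] at h0
        rw [h0] at hbp2
        exact hxc (Option.some.inj hbp2).symm
    have hu1 : Uncov S (i+1) := by
      by_contra hcov
      obtain ⟨p, hp, hle1, hle2⟩ := not_uncov hcov
      obtain ⟨x, hxc, hwp, hwp1, hwp2, hbp, hbp1, hbp2⟩ := hwin p hp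
      have hcase : i + 1 = p ∨ i + 1 = p + 1 ∨ i + 1 = p + 2 := by omega
      rcases hcase with hip | hip | hip
      · have hwi : w[i]? = some c := by rw [← hout i hui]; exact h0
        exact hcc i c hwi (by rw [hip]; exact hwp)
      · have := hui p hp; omega
      · have := hui p hp; omega
    have hu2 : Uncov S (i+2) := by
      by_contra hcov
      obtain ⟨p, hp, hle1, hle2⟩ := not_uncov hcov
      obtain ⟨x, hxc, hwp, hwp1, hwp2, hbp, hbp1, hbp2⟩ := hwin p hp
      have hcase : i + 2 = p ∨ i + 2 = p + 1 ∨ i + 2 = p + 2 := by omega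
      rcases hcase with hip | hip | hip
      · rw [← hip] at hbp
        rw [h2] at hbp
        exact hxc (Option.some.inj hbp).symm
      · have := hu1 p hp; omega
      · have := hui p hp; omega
    exact Or.inr ⟨hs, hui, hu1, hu2,
      by rw [← hout i hui]; exact h0,
      by rw [← hout (i+1) hu1]; exact h1,
      by rw [← hout (i+2) hu2]; exact h2⟩
  · -- `t = c`, pattern `s c s`
    rw [ht] at h1
    have hsc : s ≠ c := fun hh => hne (hh.trans ht.symm)
    by_cases hiS : i ∈ S
    · exact Or.inl ⟨ht, hiS⟩
    · exfalso
      have hu1 : Uncov S (i+1) := by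
        by_contra hcov
        obtain ⟨p, hp, hle1, hle2⟩ := not_uncov hcov
        obtain ⟨x, hxc, hwp, hwp1, hwp2, hbp, hbp1, hbp2⟩ := hwin p hp
        have hcase : i + 1 = p ∨ i + 1 = p + 1 ∨ i + 1 = p + 2 := by omega
        rcases hcase with hip | hip | hip
        · rw [← hip] at hbp
          rw [h1] at hbp
          exact hxc (Option.some.inj hbp).symm
        · exact hiS (by rw [show i = p by omega]; exact hp)
        · rw [← hip] at hbp2
          rw [h1] at hbp2
          exact hxc (Option.some.inj hbp2).symm
      have hw1 : w[i+1]? = some c := by rw [← hout (i+1) hu1]; exact h1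
      have hui : Uncov S i := by
        by_contra hcov
        obtain ⟨p, hp, hle1, hle2⟩ := not_uncov hcov
        obtain ⟨x, hxc, hwp, hwp1, hwp2, hbp, hbp1, hbp2⟩ := hwin p hp
        have hcase : i = p ∨ i = p + 1 ∨ i = p + 2 := by omega
        rcases hcase with hip | hip | hip
        · exact hiS (hip ▸ hp)
        · rw [← hip] at hbp1
          rw [h0] at hbp1
          exact hsc (Option.some.inj hbp1)
        · exact hcc (p+2) c hwp2 (by rw [show p + 2 + 1 = i + 1 by omega]; exact hw1)
      have hwi : w[i]? = some s := by rw [← hout i hui]; exact h0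
      have hu2 : Uncov S (i+2) := by
        by_contra hcov
        obtain ⟨p, hp, hle1, hle2⟩ := not_uncov hcov
        obtain ⟨x, hxc, hwp, hwp1, hwp2, hbp, hbp1, hbp2⟩ := hwin p hp
        have hcase : i + 2 = p ∨ i + 2 = p + 1 ∨ i + 2 = p + 2 := by omega
        rcases hcase with hip | hip | hip
        · exact hcc (i+1) c hw1 (by rw [show i + 1 + 1 = p by omega]; exact hwp)
        · have := hu1 p hp; omega
        · exact hiS (by rw [show i = p by omega]; exact hp)
      have hwi2 : w[i+2]? = some s := by rw [← hout (i+2) hu2]; exact h2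
      exact hxcx i s hsc hwi hw1 hwi2

lemma inv_step {w β β' : List B} {c : B}
    (hcc : ∀ (i : ℕ) (a : B), w[i]? = some a → w[i+1]? = some a → False)
    (hxcx : ∀ (i : ℕ) (x : B), x ≠ c → w[i]? = some x → w[i+1]? = some c →
      w[i+2]? = some x → False)
    (hletters : ∀ s t : B, s ∈ β → t ∈ β → M s t = 3 → s = c ∨ t = c)
    (hβ : ∃ S, InvS w c β S) (hmove : IsBraidMove M β β') :
    ∃ S, InvS w c β' S := by
  obtain ⟨S, hinv⟩ := hβ
  obtain ⟨q, s, t, h3, hb0, hb1, hb2, hb0', hb1', hb2', hrest⟩ := move_getElem hmove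
  have hne : s ≠ t := by
    intro h
    rw [h, M.diagonal] at h3
    omega
  have hor : s = c ∨ t = c := hletters s t (List.mem_of_getElem? hb0) (List.mem_of_getElem? hb1) h3
  obtain ⟨hsep, hwin, hout⟩ := hinv
  rcases inv_core hcc hxcx ⟨hsep, hwin, hout⟩ hor hne hb0 hb1 hb2 with
    ⟨htc, hqS⟩ | ⟨hsc, hu0, hu1, hu2, hw0, hw1, hw2⟩
  · -- reverse move at `q ∈ S`
    obtain ⟨x, hxc, hwq, hwq1, hwq2, hbq, hbq1, hbq2⟩ := hwin q hqS
    have hsx : s = x := by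
      rw [hb0] at hbq
      exact Option.some.inj hbq
    refine ⟨S.erase q, ?_, ?_, ?_⟩
    · intro p hp p' hp' hne'
      exact hsep p (Finset.mem_of_mem_erase hp) p' (Finset.mem_of_mem_erase hp') hne'
    · intro p hp
      have hpS := Finset.mem_of_mem_erase hp
      have hpq : p ≠ q := Finset.ne_of_mem_erase hp
      have hfar : p + 4 ≤ q ∨ q + 4 ≤ p := hsep p hpS q hqS hpq
      obtain ⟨y, hyc, hwy, hwy1, hwy2, hby, hby1, hby2⟩ := hwin p hpS
      exact ⟨y, hyc, hwy, hwy1, hwy2,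
        by rw [hrest p (by omega) (by omega) (by omega)]; exact hby,
        by rw [hrest (p+1) (by omega) (by omega) (by omega)]; exact hby1,
        by rw [hrest (p+2) (by omega) (by omega) (by omega)]; exact hby2⟩
    · intro k hk
      by_cases hkq : k = q ∨ k = q + 1 ∨ k = q + 2
      · rcases hkq with rfl | rfl | rfl
        · rw [hb0', htc, hwq]
        · rw [hb1', hsx, hwq1]
        · rw [hb2', htc, hwq2]
      · push_neg at hkq
        obtain ⟨hk1, hk2, hk3⟩ := hkq
        rw [hrest k hk1 hk2 hk3]
        refine hout k ?_
        intro p hp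
        by_cases hpq : p = q
        · subst hpq; omega
        · exact hk p (Finset.mem_erase_of_ne_of_mem hpq hp)
  · -- new site at `q`
    have htc : t ≠ c := fun hh => hne (hsc.trans hh.symm)
    have hqnotS : q ∉ S := by
      intro hq
      have := hu0 q hq
      omega
    have hfar : ∀ p ∈ S, q + 4 ≤ p ∨ p + 4 ≤ q := by
      intro p hp
      obtain ⟨y, hyc, hwy, hwy1, hwy2, hby, hby1, hby2⟩ := hwin p hp
      have c0 := hu0 p hp
      have c2 := hu2 p hp
      rcases c0 with h0' | h0'
      · rcases c2 with h2' | h2'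
        · by_cases he : p = q + 3
          · exfalso
            refine hcc (q+2) c hw2 ?_
            rw [show q + 2 + 1 = p by omega]
            exact hwy
          · left; omega
        · omega
      · by_cases he : q = p + 3
        · exfalso
          refine hcc (p+2) c hwy2 ?_
          rw [show p + 2 + 1 = q by omega]
          exact hw0
        · right; omega
    refine ⟨insert q S, ?_, ?_, ?_⟩
    · intro p hp p' hp' hne'
      rcases Finset.mem_insert.mp hp with rfl | hp2
      · rcases Finset.mem_insert.mp hp' with rfl | hp'2
        · exact absurd rfl hne'
        · exact hfar p' hp'2
      · rcases Finset.mem_insert.mp hp' with rfl | hp'2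
        · exact (hfar p hp2).symm
        · exact hsep p hp2 p' hp'2 hne'
    · intro p hp
      rcases Finset.mem_insert.mp hp with rfl | hp2
      · exact ⟨t, htc, hw0, hw1, hw2, hb0', by rw [hb1', hsc], hb2'⟩
      · obtain ⟨y, hyc, hwy, hwy1, hwy2, hby, hby1, hby2⟩ := hwin p hp2
        have hf := hfar p hp2
        exact ⟨y, hyc, hwy, hwy1, hwy2,
          by rw [hrest p (by omega) (by omega) (by omega)]; exact hby,
          by rw [hrest (p+1) (by omega) (by omega) (by omega)]; exact hby1,
          by rw [hrest (p+2) (by omega) (by omega) (by omega)]; exact hby2⟩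
    · intro k hk
      have hkq := hk q (Finset.mem_insert_self q S)
      have hkS : Uncov S k := fun p hp => hk p (Finset.mem_insert_of_mem hp)
      rw [hrest k (by omega) (by omega) (by omega)]
      exact hout k hkS

lemma inv_of_equiv {w β : List B} {c : B}
    (hcc : ∀ (i : ℕ) (a : B), w[i]? = some a → w[i+1]? = some a → False)
    (hxcx : ∀ (i : ℕ) (x : B), x ≠ c → w[i]? = some x → w[i+1]? = some c →
      w[i+2]? = some x → False)
    (hw_letters : ∀ s t : B, s ∈ w → t ∈ w → M s t = 3 → s = c ∨ t = c)
    (h : BraidEquiv M w β) : ∃ S, InvS w c β S := by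
  induction h with
  | refl =>
      refine ⟨∅, ?_, ?_, ?_⟩
      · intro p hp; simp at hp
      · intro p hp; simp at hp
      · intro k _; rfl
  | @tail b b' hwb hmove ih =>
      refine inv_step hcc hxcx ?_ ih hmove
      intro s t hs ht h3
      exact hw_letters s t (equiv_mem (equivSymm hwb) hs) (equiv_mem (equivSymm hwb) ht) h3

lemma exists_max_measure (α : List B) (f : List B → ℕ)
    (hf : ∀ β, BraidEquiv M α β → f β ≤ α.length) :
    ∃ w, BraidEquiv M α w ∧ ∀ β, BraidEquiv M w β → f β ≤ f w := by
  have hne : Set.Nonempty {n | ∃ β, BraidEquiv M α β ∧ f β = n} :=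
    ⟨f α, α, Relation.ReflTransGen.refl, rfl⟩
  have hbdd : BddAbove {n | ∃ β, BraidEquiv M α β ∧ f β = n} := by
    refine ⟨α.length, ?_⟩
    rintro n ⟨β, hβ, rfl⟩
    exact hf β hβ
  obtain ⟨w, hw, hfw⟩ := Nat.sSup_mem hne hbdd
  refine ⟨w, hw, fun β hβ => ?_⟩
  rw [hfw]
  exact le_csSup hbdd ⟨β, Relation.ReflTransGen.trans hw hβ, rfl⟩

end Aux

/-- a link is braid equivalent to a Fibonacci link iff the subgraph of
the Coxeter graph induced by its support is a star graph. -/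
theorem statement_14 {B W : Type*} [Group W] {M : CoxeterMatrix B}
    (cs : CoxeterSystem M W) (hsl : SimplyLaced M) (htf : TriangleFree M)
    (α : List B) (r : ℕ) (hlink : IsLink cs α r) (hr : 1 ≤ r) :
    (∃ φ ∈ BraidClass M α, IsFibLink cs φ r) ↔ IsStarOn M {s | s ∈ α} := by
  classical
  obtain ⟨hred, hlen, hshadows⟩ := hlink
  constructor
  · -- a Fibonacci link in the class forces the support to be a star
    rintro ⟨φ, hφ, hφfib⟩
    obtain ⟨⟨hφred, hφlen, hφsh⟩, hfib⟩ := hφfib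
    have hsh : ∀ j, j < r → HasShadowAt M φ (2*j) := by
      intro j hj
      exact hfib (2*j) ((hφsh (2*j)).mpr ⟨j, hj, rfl⟩)
    obtain ⟨c, t0, h30, e00, e01, e02⟩ := hsh 0 (by omega)
    have heven : ∀ j, j ≤ r → φ[2*j]? = some c := by
      intro j
      induction j with
      | zero => intro _; exact e00
      | succ j ihj =>
          intro hj
          obtain ⟨s, t, h3, f0, f1, f2⟩ := hsh j (by omega)
          have hcs : c = s := Option.some.inj ((ihj (by omega)).symm.trans f0)
          rw [← hcs] at f2
          rw [show 2*(j+1) = 2*j+2 by omega]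
          exact f2
    have hodd : ∀ x : B, x ∈ φ → x ≠ c → M x c = 3 := by
      intro x hx hxc
      obtain ⟨k, hk, hke⟩ := List.mem_iff_getElem.mp hx
      have hkq : φ[k]? = some x := by rw [List.getElem?_eq_getElem hk, hke]
      rcases Nat.even_or_odd k with ⟨j, hj⟩ | ⟨j, hj⟩
      · exfalso
        have hk' : k < 2*r+1 := by rw [← hφlen]; exact hk
        have hc := heven j (by omega)
        rw [show 2*j = k by omega] at hc
        rw [hkq] at hc
        exact hxc (Option.some.inj hc)
      · have hk' : k < 2*r+1 := by rw [← hφlen]; exact hk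
        have hjr : j < r := by omega
        obtain ⟨s, t, h3, f0, f1, f2⟩ := hsh j hjr
        have hcs : c = s := Option.some.inj ((heven j (by omega)).symm.trans f0)
        have hxt : t = x := by
          rw [show 2*j+1 = k by omega] at f1
          rw [hkq] at f1
          exact Option.some.inj f1.symm
        rw [← hcs, hxt] at h3
        rw [M.symmetric]
        exact h3
    have hmemφα : ∀ x : B, x ∈ φ → x ∈ α := fun x hx => equiv_mem (equivSymm hφ) hx
    have hmemαφ : ∀ x : B, x ∈ α → x ∈ φ := fun x hx => equiv_mem hφ hx
    refine ⟨c, ?_, ?_, ?_⟩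
    · exact hmemφα c (List.mem_of_getElem? (heven 0 (by omega)))
    · intro x hx hxc
      exact hodd x (hmemαφ x hx) hxc
    · intro x hx y hy hxc hyc hxy
      have hx3 := hodd x (hmemαφ x hx) hxc
      have hy3 := hodd y (hmemαφ y hy) hyc
      refine htf x c y hxc (fun h => hyc h.symm) hxy hx3 ?_
      rw [M.symmetric]
      exact hy3
  · -- a star support forces a Fibonacci link in the class
    rintro ⟨c, hcα, hadj, hnadj⟩
    have hw_letters_α : ∀ s t : B, s ∈ α → t ∈ α → M s t = 3 → s = c ∨ t = c := by
      intro s t hs ht h3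
      by_contra hcon
      push_neg at hcon
      obtain ⟨hsc, htc⟩ := hcon
      have hst : s ≠ t := by
        intro h
        rw [h, M.diagonal] at h3
        omega
      exact hnadj s hs t ht hsc htc hst h3
    obtain ⟨w, hw, hmax⟩ := exists_max_measure α (fun l => l.countP (fun x => decide (x = c)))
      (fun β hβ => List.countP_le_length.trans_eq (equiv_length hβ).symm)
    have hwred : cs.IsReduced w := equiv_isReduced cs hw hred
    have hmemw : ∀ x : B, x ∈ w → x ∈ α := fun x hx => equiv_mem (equivSymm hw) hx
    have hcc : ∀ (i : ℕ) (a : B), w[i]? = some a → w[i+1]? = some a → False :=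
      fun i a ha hb => not_adjacent_eq cs hwred ha hb
    have hw_letters : ∀ s t : B, s ∈ w → t ∈ w → M s t = 3 → s = c ∨ t = c :=
      fun s t hs ht h3 => hw_letters_α s t (hmemw s hs) (hmemw t ht) h3
    have hxcx : ∀ (i : ℕ) (x : B), x ≠ c → w[i]? = some x → w[i+1]? = some c →
        w[i+2]? = some x → False := by
      intro i x hxc ha hb hd
      have hdec := eq_take_triple ha hb hd
      have h3 : M x c = 3 := hadj x (hmemw x (List.mem_of_getElem? ha)) hxc
      have hmove : IsBraidMove M w (w.take i ++ [c, x, c] ++ w.drop (i+3)) :=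
        ⟨w.take i, w.drop (i+3), x, c, h3, hdec, rfl⟩
      have hle := hmax _ (Relation.ReflTransGen.single hmove)
      have ew : w.countP (fun y => decide (y = c)) =
          (w.take i ++ [x, c, x] ++ w.drop (i+3)).countP (fun y => decide (y = c)) := by
        conv_lhs => rw [hdec]
      have e1 : (w.take i ++ [x, c, x] ++ w.drop (i+3)).countP (fun y => decide (y = c)) + 1 =
          (w.take i ++ [c, x, c] ++ w.drop (i+3)).countP (fun y => decide (y = c)) := by
        simp [List.countP_append, List.countP_cons, hxc]
        omega
      omega
    have hsite : ∀ j, j < r → w[2*j]? = some c ∧ w[2*j+2]? = some c := by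
      intro j hj
      obtain ⟨β, hβ, hshβ⟩ := (hshadows (2*j)).mpr ⟨j, hj, rfl⟩
      have hwβ : BraidEquiv M w β := Relation.ReflTransGen.trans (equivSymm hw) hβ
      obtain ⟨S, hinv⟩ := inv_of_equiv hcc hxcx hw_letters hwβ
      obtain ⟨s, t, h3, f0, f1, f2⟩ := hshβ
      have hne : s ≠ t := by
        intro h
        rw [h, M.diagonal] at h3
        omega
      have hmemβ : ∀ x : B, x ∈ β → x ∈ w := fun x hx => equiv_mem (equivSymm hwβ) hx
      have hor : s = c ∨ t = c := hw_letters s t (hmemβ s (List.mem_of_getElem? f0))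
        (hmemβ t (List.mem_of_getElem? f1)) h3
      rcases inv_core hcc hxcx hinv hor hne f0 f1 f2 with
        ⟨htc, hiS⟩ | ⟨_, _, _, _, g0, _, g2⟩
      · obtain ⟨x, _, g0, _, g2, _, _, _⟩ := hinv.2.1 _ hiS
        exact ⟨g0, g2⟩
      · exact ⟨g0, g2⟩
    have hwlen : w.length = 2*r+1 := by rw [← equiv_length hw]; exact hlen
    have hwsh : ∀ j, j < r → HasShadowAt M w (2*j) := by
      intro j hj
      obtain ⟨g0, g2⟩ := hsite j hj
      have h1lt : 2*j+1 < w.length := by omega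
      obtain ⟨t, ht⟩ : ∃ t, w[2*j+1]? = some t := ⟨_, List.getElem?_eq_getElem h1lt⟩
      have htc : t ≠ c := by
        intro h
        rw [h] at ht
        exact hcc (2*j) c g0 ht
      have h3 : M c t = 3 := by
        rw [M.symmetric]
        exact hadj t (hmemw t (List.mem_of_getElem? ht)) htc
      exact ⟨c, t, h3, g0, ht, g2⟩
    have hclassiff : ∀ i, ClassHasShadowAt M w i ↔ ClassHasShadowAt M α i := by
      intro i
      unfold ClassHasShadowAt
      rw [class_eq (equivSymm hw)]
    refine ⟨w, hw, ⟨hwred, hwlen, ?_⟩, ?_⟩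
    · intro i
      rw [hclassiff i]
      exact hshadows i
    · intro i hcl
      obtain ⟨j, hj, rfl⟩ := (hshadows i).mp ((hclassiff i).mp hcl)
      exact hwsh j hj

end BraidFormal
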